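/- Let K, σ, τ > 0, let Φ be the standard normal cumulative distribution function, let R_x ∈ (0,1) and q ∈ ℝ satisfy Φ(q) = 1 − R_x, and let the reported spot price be S = K·exp(q·σ√τ)·exp(−σ²τ/2). Then R_x = Φ(−d1), where d1 = (ln(S/K) + (σ²/2)τ)/(σ√τ). In other words, the risky reserve of an RMM-01 pool equals the Black-Scholes asset-or-nothing put payoff Φ(−d1) (denominated in the risky asset) at the pool's reported spot price. -/

import Mathlib

open Real Filter

/-- The cumulative distribution function of the standard normal distribution
(Gaussian measure on ℝ with mean 0 and variance 1). -/
noncomputable def Φ (x : ℝ) : ℝ :=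
  (ProbabilityTheory.gaussianReal 0 1 (Set.Iic x)).toReal

lemma Phi_neg (q : ℝ) : Φ (-q) = 1 - Φ q := by
  set μ := ProbabilityTheory.gaussianReal 0 1 with hμ
  have hmap : μ.map (fun x => (-1 : ℝ) * x) = μ := by
    have := ProbabilityTheory.gaussianReal_map_const_mul (μ := 0) (v := 1) (-1)
    simpa using this
  have h1 : μ (Set.Iic (-q)) = μ (Set.Ici q) := by
    conv_lhs => rw [← hmap]
    rw [MeasureTheory.Measure.map_apply (measurable_const_mul _) measurableSet_Iic]
    congr 1
    ext x
    simp [neg_le]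
  have hq0 : μ {q} = 0 := by
    have hac := ProbabilityTheory.gaussianReal_absolutelyContinuous 0 (one_ne_zero : (1 : NNReal) ≠ 0)
    exact hac (MeasureTheory.measure_singleton q)
  have hIci : μ (Set.Ici q) = μ (Set.Ioi q) := by
    apply le_antisymm
    · have : Set.Ici q = {q} ∪ Set.Ioi q := by
        ext x; simp [le_iff_lt_or_eq, or_comm, eq_comm]
      rw [this]
      calc μ ({q} ∪ Set.Ioi q) ≤ μ {q} + μ (Set.Ioi q) := MeasureTheory.measure_union_le _ _
        _ = μ (Set.Ioi q) := by rw [hq0, zero_add]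
    · exact MeasureTheory.measure_mono Set.Ioi_subset_Ici_self
  have hadd : μ (Set.Iic q) + μ (Set.Ioi q) = 1 := by
    have := MeasureTheory.measure_add_measure_compl (μ := μ) (measurableSet_Iic (a := q))
    simpa [Set.compl_Iic] using this
  have hne1 : μ (Set.Iic q) ≠ ⊤ := MeasureTheory.measure_ne_top μ _
  have hne2 : μ (Set.Ioi q) ≠ ⊤ := MeasureTheory.measure_ne_top μ _
  have hreal : (μ (Set.Iic q)).toReal + (μ (Set.Ioi q)).toReal = 1 := by
    rw [← ENNReal.toReal_add hne1 hne2, hadd]; simp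
  show (μ (Set.Iic (-q))).toReal = 1 - (μ (Set.Iic q)).toReal
  rw [h1, hIci]
  linarith

/-- The risky reserve of an RMM-01 pool equals the Black--Scholes asset-or-nothing put
payoff Φ(−d1) (denominated in the risky asset) at the pool's reported spot price. -/
theorem risky_reserve_is_aonp (K σ τ : ℝ) (hK : 0 < K) (hσ : 0 < σ) (hτ : 0 < τ)
    (Rx : ℝ) (hRx : Rx ∈ Set.Ioo (0 : ℝ) 1) (q : ℝ) (hq : Φ q = 1 - Rx)
    (S : ℝ) (hS : S = K * Real.exp (q * (σ * Real.sqrt τ)) * Real.exp (-(σ ^ 2 * τ) / 2))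
    (d1 : ℝ) (hd1 : d1 = (Real.log (S / K) + (σ ^ 2 / 2) * τ) / (σ * Real.sqrt τ)) :
    Rx = Φ (-d1) := by
  have hst : σ * Real.sqrt τ ≠ 0 :=
    mul_ne_zero hσ.ne' (Real.sqrt_ne_zero'.mpr hτ)
  have hSK : S / K = Real.exp (q * (σ * Real.sqrt τ) + -(σ ^ 2 * τ) / 2) := by
    rw [hS, Real.exp_add]
    field_simp
  have hlog : Real.log (S / K) = q * (σ * Real.sqrt τ) + -(σ ^ 2 * τ) / 2 := by
    rw [hSK, Real.log_exp]
  have hd1q : d1 = q := by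
    rw [hd1, hlog]
    field_simp
    ring
  rw [hd1q, Phi_neg, hq]
  ring
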